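/- Let α be a product of k disjoint r-cycles α_i = (x_{i1}, x_{i2}, ..., x_{ir}) for i = 1,...,k, and let β = (x_{11}, x_{21}, ..., x_{k1}) be the k-cycle on the first entries. Then for any permutation ω with β^ω = β⁻¹ and support of ω contained in the support of β, there exists a permutation ν with support contained in M(α) \ M(β) such that (ωúν) conjugates α to α⁻¹ and β to β⁻¹. -/

import Mathlib

/-- If every permutation in the list fixes `y`, so does the product. -/
lemma stmt3_prod_fix {X : Type*} (l : List (Equiv.Perm X)) (y : X)
    (h : ∀ σ ∈ l, σ y = y) : l.prod y = y := by
  induction l with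
  | nil => simp
  | cons a t ih =>
    rw [List.prod_cons, Equiv.Perm.mul_apply, ih (fun σ hσ => h σ (List.mem_cons_of_mem _ hσ))]
    exact h a (List.mem_cons_self)

/-- Product of a pairwise-disjoint list applied at a point moved by a member. -/
lemma stmt3_prod_apply_mem {X : Type*} (l : List (Equiv.Perm X))
    (hl : l.Pairwise Equiv.Perm.Disjoint) (σ : Equiv.Perm X) (hσ : σ ∈ l)
    (y : X) (hy : σ y ≠ y) : l.prod y = σ y := by
  induction l with
  | nil => simp at hσ
  | cons a t ih =>
    rw [List.pairwise_cons] at hl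
    rw [List.prod_cons, Equiv.Perm.mul_apply]
    rcases List.mem_cons.mp hσ with rfl | hmem
    · rw [stmt3_prod_fix t y ?_]
      intro τ hτ
      rcases (hl.1 τ hτ) y with h | h
      · exact absurd h hy
      · exact h
    · rw [ih hl.2 hmem]
      rcases (hl.1 σ hmem) (σ y) with h | h
      · exact h
      · exact absurd (σ.injective h) hy

/-- Corollary 2.2: α a product of k disjoint r-cycles on the points x i j,
β the k-cycle on the first entries x i 0.  For any ω with β^ω = β⁻¹ and
M(ω) ⊆ M(β), there is ν with M(ν) ⊆ M(α) \ M(β) such that ων conjugates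
α to α⁻¹ and β to β⁻¹. -/
theorem stmt_3 {n k r : ℕ} (hk : 2 ≤ k) (hr : 2 ≤ r)
    (x : Fin k → Fin r → Fin n)
    (hinj : Function.Injective (fun p : Fin k × Fin r => x p.1 p.2))
    (α β : Equiv.Perm (Fin n))
    (hα : α = (List.ofFn (fun i : Fin k => (List.ofFn (x i)).formPerm)).prod)
    (hβ : β = (List.ofFn (fun i : Fin k => x i ⟨0, by omega⟩)).formPerm)
    (ω : Equiv.Perm (Fin n)) (hω1 : ω⁻¹ * β * ω = β⁻¹) (hω2 : ω.support ⊆ β.support) :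
    ∃ ν : Equiv.Perm (Fin n), ν.support ⊆ α.support \ β.support ∧
      (ω * ν)⁻¹ * α * (ω * ν) = α⁻¹ ∧ (ω * ν)⁻¹ * β * (ω * ν) = β⁻¹ := by
  classical
  have hrpos : 0 < r := by omega
  haveI : NeZero r := ⟨by omega⟩
  haveI : NeZero k := ⟨by omega⟩
  -- basic injectivity facts
  have hxij : ∀ (i i' : Fin k) (j j' : Fin r), x i j = x i' j' → i = i' ∧ j = j' := by
    intro i i' j j' h
    have := hinj (a₁ := (i, j)) (a₂ := (i', j')) h
    exact ⟨congrArg Prod.fst this, congrArg Prod.snd this⟩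
  have hx1 : ∀ i : Fin k, Function.Injective (x i) := by
    intro i a b h; exact (hxij i i a b h).2
  have nodup_i : ∀ i : Fin k, (List.ofFn (x i)).Nodup := fun i => List.nodup_ofFn.mpr (hx1 i)
  have h1val : ((1 : Fin r) : ℕ) = 1 := by
    rw [Fin.val_one']
    exact Nat.mod_eq_of_lt (by omega)
  have hone : (1 : Fin r) ≠ 0 := by
    intro h
    have := congrArg Fin.val h
    rw [h1val] at this
    simp at this
  have hβ0 : β = (List.ofFn (fun i : Fin k => x i 0)).formPerm := by
    rw [hβ]
    have h0 : (⟨0, by omega⟩ : Fin r) = 0 := Fin.ext (by simp)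
    rw [h0]
  -- value of each r-cycle
  have σval : ∀ (i : Fin k) (j : Fin r), (List.ofFn (x i)).formPerm (x i j) = x i (j + 1) := by
    intro i j
    have hjl : (j : ℕ) < (List.ofFn (x i)).length := by simp [j.isLt]
    have h := List.formPerm_apply_getElem (List.ofFn (x i)) (nodup_i i) j hjl
    simp only [List.getElem_ofFn, Fin.eta] at h
    rw [h]
    congr 1
    ext
    simp only [List.length_ofFn, Fin.val_add, h1val]
  have hsucc_ne : ∀ j : Fin r, j + 1 ≠ j := by
    intro j h
    exact hone (by simpa using congrArg (fun t => t - j) h)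
  -- each r-cycle moves each x i j
  have σmoves : ∀ (i : Fin k) (j : Fin r), (List.ofFn (x i)).formPerm (x i j) ≠ x i j := by
    intro i j h
    rw [σval] at h
    exact hsucc_ne j (hxij i i (j + 1) j h).2
  -- pairwise disjointness
  have hdisj : ∀ (i i' : Fin k), i ≠ i' →
      Equiv.Perm.Disjoint ((List.ofFn (x i)).formPerm) ((List.ofFn (x i')).formPerm) := by
    intro i i' hne y
    by_cases hy : y ∈ List.ofFn (x i)
    · right
      apply List.formPerm_apply_of_notMem
      intro hy'
      rw [List.mem_ofFn] at hy hy'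
      obtain ⟨j, hj⟩ := hy
      obtain ⟨j', hj'⟩ := hy'
      exact hne ((hxij i i' j j' (hj.trans hj'.symm)).1)
    · left
      exact List.formPerm_apply_of_notMem hy
  have hpair : (List.ofFn (fun i : Fin k => (List.ofFn (x i)).formPerm)).Pairwise
      Equiv.Perm.Disjoint := by
    rw [List.pairwise_ofFn]
    intro i j hij
    exact hdisj i j (ne_of_lt hij)
  -- value of α
  have αval : ∀ (i : Fin k) (j : Fin r), α (x i j) = x i (j + 1) := by
    intro i j
    rw [hα, stmt3_prod_apply_mem _ hpair ((List.ofFn (x i)).formPerm)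
      (by rw [List.mem_ofFn]; exact ⟨i, rfl⟩) _ (σmoves i j)]
    exact σval i j
  have αfix : ∀ y : Fin n, (y ∉ Set.range fun p : Fin k × Fin r => x p.1 p.2) → α y = y := by
    intro y hy
    rw [hα]
    apply stmt3_prod_fix
    intro σ hσ
    rw [List.mem_ofFn] at hσ
    obtain ⟨i, rfl⟩ := hσ
    apply List.formPerm_apply_of_notMem
    intro hmem
    rw [List.mem_ofFn] at hmem
    obtain ⟨j, hj⟩ := hmem
    exact hy ⟨(i, j), hj⟩
  -- support of β
  have βsupp : ∀ y ∈ β.support, ∃ i : Fin k, x i 0 = y := by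
    intro y hy
    rw [hβ0] at hy
    have := List.support_formPerm_le (List.ofFn (fun i : Fin k => x i 0)) hy
    rw [List.mem_toFinset, List.mem_ofFn] at this
    exact this
  -- ω maps first entries to first entries
  have hf' : ∀ i : Fin k, ∃ i' : Fin k, x i' 0 = ω (x i 0) := by
    intro i
    by_cases h : x i 0 ∈ ω.support
    · exact βsupp _ (hω2 (Equiv.Perm.apply_mem_support.mpr h))
    · exact ⟨i, (Equiv.Perm.notMem_support.mp h).symm⟩
  choose f hf using hf'
  have finj : Function.Injective f := by
    intro a b h
    have : ω (x a 0) = ω (x b 0) := by rw [← hf, ← hf, h]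
    exact (hxij a b 0 0 (ω.injective this)).1
  let fe : Equiv.Perm (Fin k) := Equiv.ofBijective f (Finite.injective_iff_bijective.mp finj)
  let emb : Fin k × Fin r ↪ Fin n := ⟨fun p => x p.1 p.2, hinj⟩
  let π : Equiv.Perm (Fin k × Fin r) := fe.prodCongr (Equiv.neg (Fin r))
  let τ : Equiv.Perm (Fin n) := π.viaEmbedding emb
  have τval : ∀ (i : Fin k) (j : Fin r), τ (x i j) = x (f i) (-j) := by
    intro i j
    have := π.viaEmbedding_apply emb (i, j)
    simpa [π, emb, fe, Equiv.prodCongr_apply] using this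
  have τfix : ∀ y : Fin n, (y ∉ Set.range fun p : Fin k × Fin r => x p.1 p.2) → τ y = y := by
    intro y hy
    exact π.viaEmbedding_apply_of_notMem emb y hy
  have hsub : (ω⁻¹ * τ).support ⊆ α.support \ β.support := by
    intro y hy
    rw [Equiv.Perm.mem_support] at hy
    by_cases hmem : y ∈ Set.range fun p : Fin k × Fin r => x p.1 p.2
    · obtain ⟨⟨i, j⟩, rfl⟩ := hmem
      by_cases hj : j = 0
      · exfalso
        subst hj
        apply hy
        rw [Equiv.Perm.mul_apply, τval, neg_zero, hf, ← Equiv.Perm.mul_apply, inv_mul_cancel, Equiv.Perm.one_apply]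
      · rw [Finset.mem_sdiff]
        constructor
        · rw [Equiv.Perm.mem_support, αval]
          intro h
          exact hsucc_ne j (hxij i i (j + 1) j h).2
        · intro hmem'
          obtain ⟨i', hi'⟩ := βsupp _ hmem'
          exact hj (hxij i' i 0 j hi').2.symm
    · exfalso
      apply hy
      have h1 : τ y = y := τfix y hmem
      have h2 : ω y = y := by
        apply Equiv.Perm.notMem_support.mp
        intro hsup
        obtain ⟨i, hi⟩ := βsupp y (hω2 hsup)
        exact hmem ⟨(i, 0), hi⟩
      rw [Equiv.Perm.mul_apply, h1, ← h2, ← Equiv.Perm.mul_apply, inv_mul_cancel, Equiv.Perm.one_apply, h2]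
  have hτ : ω * (ω⁻¹ * τ) = τ := by group
  refine ⟨ω⁻¹ * τ, hsub, ?_, ?_⟩
  · rw [hτ]
    have key : α * τ = τ * α⁻¹ := by
      ext y
      rw [Equiv.Perm.mul_apply, Equiv.Perm.mul_apply]
      by_cases hmem : y ∈ Set.range fun p : Fin k × Fin r => x p.1 p.2
      · obtain ⟨⟨i, j⟩, rfl⟩ := hmem
        have hαinv : α⁻¹ (x i j) = x i (j - 1) := by
          rw [Equiv.Perm.inv_eq_iff_eq, αval, sub_add_cancel]
        rw [hαinv, τval, τval, αval]
        congr 1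
        abel
      · rw [τfix y hmem, αfix y hmem]
        have : α⁻¹ y = y := by rw [Equiv.Perm.inv_eq_iff_eq, αfix y hmem]
        rw [this, τfix y hmem]
    calc τ⁻¹ * α * τ = τ⁻¹ * (α * τ) := by group
    _ = τ⁻¹ * (τ * α⁻¹) := by rw [key]
    _ = α⁻¹ := by group
  · rw [hτ]
    have hd : Equiv.Perm.Disjoint (ω⁻¹ * τ) β := by
      rw [Equiv.Perm.disjoint_iff_disjoint_support]
      exact Finset.disjoint_left.mpr fun y hy => (Finset.mem_sdiff.mp (hsub hy)).2
    have hc : Commute (ω⁻¹ * τ) β⁻¹ := hd.commute.inv_right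
    calc τ⁻¹ * β * τ = (ω⁻¹ * τ)⁻¹ * (ω⁻¹ * β * ω) * (ω⁻¹ * τ) := by group
    _ = (ω⁻¹ * τ)⁻¹ * β⁻¹ * (ω⁻¹ * τ) := by rw [hω1]
    _ = β⁻¹ := by rw [mul_assoc, ← hc.eq, ← mul_assoc, inv_mul_cancel, one_mul]
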